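/- Under the hypotheses of the preconditioned steepest descent convergence theorem — (E1)–(E3), (L1)–(L5), the PSD sequence u^{k+1} = u^k + α_k d^k with (d^k,ξ)_L = −δE[u^k](ξ) and α_k the exact line-search minimizer, and u the unique minimizer of E — assume additionally (L6): there is C₈ > 0 such that C₈‖ξ‖_L² ≤ δ²E[ν](ξ,ξ) for all ν, ξ ∈ H. Then, with C₇ := 1 − C₅/(2C₆) and e^k := u − u^k, one has for every k ≥ 0: ‖e^k‖_L² ≤ (2/C₈) · C₇^k · (E[u⁰] − E[u]). -/

import Mathlib

private lemma psd_mono_aux {g g' : ℝ → ℝ} (hg : ∀ t, HasDerivAt g (g' t) t)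
    {a b : ℝ} (hab : a ≤ b) (h : ∀ t ∈ Set.Icc a b, 0 ≤ g' t) : g a ≤ g b := by
  have hm : MonotoneOn g (Set.Icc a b) :=
    monotoneOn_of_deriv_nonneg (convex_Icc a b)
      (fun t _ => (hg t).continuousAt.continuousWithinAt)
      (fun t _ => ((hg t).differentiableAt).differentiableWithinAt)
      (fun t ht => by rw [(hg t).deriv]; exact h t (interior_subset ht))
  exact hm (Set.left_mem_Icc.2 hab) (Set.right_mem_Icc.2 hab) hab

private lemma psd_hasDerivAt_line {H : Type*} [NormedAddCommGroup H] [NormedSpace ℝ H]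
    {E : H → ℝ} {E' : H → H →L[ℝ] ℝ} (hE' : ∀ x : H, HasFDerivAt E (E' x) x)
    (a v : H) (t : ℝ) :
    HasDerivAt (fun s : ℝ => E (a + s • v)) (E' (a + t • v) v) t := by
  have hline : HasDerivAt (fun s : ℝ => a + s • v) v t := by
    simpa using ((hasDerivAt_id t).smul_const v).const_add a
  exact (hE' (a + t • v)).comp_hasDerivAt t hline

private lemma psd_hasDerivAt_line' {H : Type*} [NormedAddCommGroup H] [NormedSpace ℝ H]
    {E' : H → H →L[ℝ] ℝ} {E'' : H → H →L[ℝ] H →L[ℝ] ℝ}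
    (hE'' : ∀ x : H, HasFDerivAt E' (E'' x) x)
    (a v : H) (t : ℝ) :
    HasDerivAt (fun s : ℝ => E' (a + s • v) v) (E'' (a + t • v) v v) t := by
  have hline : HasDerivAt (fun s : ℝ => a + s • v) v t := by
    simpa using ((hasDerivAt_id t).smul_const v).const_add a
  have h1 : HasDerivAt (fun s : ℝ => E' (a + s • v)) (E'' (a + t • v) v) t :=
    (hE'' (a + t • v)).comp_hasDerivAt t hline
  have h2 := (ContinuousLinearMap.apply ℝ ℝ v).hasFDerivAt.comp_hasDerivAt t h1
  simpa [Function.comp_def] using h2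

/-- lower derivative comparison: if `φ'' ≥ c` on `[0,s]` then `φ' 0 + c*s ≤ φ' s`. -/
private lemma psd_deriv_lower {φ' φ'' : ℝ → ℝ} (hφ' : ∀ t, HasDerivAt φ' (φ'' t) t)
    {c s : ℝ} (hs : 0 ≤ s) (hc : ∀ t ∈ Set.Icc 0 s, c ≤ φ'' t) :
    φ' 0 + c * s ≤ φ' s := by
  have h := psd_mono_aux (g := fun t => φ' t - c * t) (g' := fun t => φ'' t - c)
    (fun t => by simpa [Pi.sub_def] using (hφ' t).sub ((hasDerivAt_id t).const_mul c))
    hs (fun t ht => sub_nonneg.2 (hc t ht))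
  simp only [mul_zero, sub_zero] at h
  linarith

private lemma psd_deriv_upper {φ' φ'' : ℝ → ℝ} (hφ' : ∀ t, HasDerivAt φ' (φ'' t) t)
    {c s : ℝ} (hs : 0 ≤ s) (hc : ∀ t ∈ Set.Icc 0 s, φ'' t ≤ c) :
    φ' s ≤ φ' 0 + c * s := by
  have h := psd_deriv_lower (φ' := fun t => -φ' t) (φ'' := fun t => -φ'' t)
    (fun t => (hφ' t).neg) (c := -c) hs (fun t ht => neg_le_neg (hc t ht))
  simp only [neg_mul] at h
  linarith

/-- Taylor lower bound: if `φ'' ≥ c` on `[0,s]` then `φ 0 + φ' 0 * s + c/2 * s^2 ≤ φ s`. -/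
private lemma psd_taylor_lower {φ φ' φ'' : ℝ → ℝ} (hφ : ∀ t, HasDerivAt φ (φ' t) t)
    (hφ' : ∀ t, HasDerivAt φ' (φ'' t) t) {c s : ℝ} (hs : 0 ≤ s)
    (hc : ∀ t ∈ Set.Icc 0 s, c ≤ φ'' t) :
    φ 0 + φ' 0 * s + c / 2 * s ^ 2 ≤ φ s := by
  have key : ∀ t ∈ Set.Icc 0 s, 0 ≤ φ' t - φ' 0 * 1 - c / 2 * (2 * t ^ 1) := by
    intro t ht
    have h1 : φ' 0 + c * t ≤ φ' t :=
      psd_deriv_lower hφ' ht.1 (fun r hr => hc r ⟨hr.1, le_trans hr.2 ht.2⟩)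
    simp only [mul_one, pow_one]
    linarith
  have h := psd_mono_aux
    (g := fun t => φ t - φ' 0 * t - c / 2 * t ^ 2)
    (g' := fun t => φ' t - φ' 0 * 1 - c / 2 * (2 * t ^ 1))
    (fun t => ((hφ t).sub ((hasDerivAt_id t).const_mul (φ' 0))).sub
      ((hasDerivAt_pow 2 t).const_mul (c / 2)))
    hs key
  norm_num at h
  linarith

private lemma psd_taylor_upper {φ φ' φ'' : ℝ → ℝ} (hφ : ∀ t, HasDerivAt φ (φ' t) t)
    (hφ' : ∀ t, HasDerivAt φ' (φ'' t) t) {c s : ℝ} (hs : 0 ≤ s)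
    (hc : ∀ t ∈ Set.Icc 0 s, φ'' t ≤ c) :
    φ s ≤ φ 0 + φ' 0 * s + c / 2 * s ^ 2 := by
  have h := psd_taylor_lower (φ := fun t => -φ t) (φ' := fun t => -φ' t)
    (φ'' := fun t => -φ'' t) (fun t => (hφ t).neg) (fun t => (hφ' t).neg)
    (c := -c) hs (fun t ht => neg_le_neg (hc t ht))
  simp only [neg_mul, neg_div] at h
  linarith

private lemma psd_cs {H : Type*} [NormedAddCommGroup H] [NormedSpace ℝ H]
    (B : H →L[ℝ] H →L[ℝ] ℝ) (hBsymm : ∀ ν ξ : H, B ν ξ = B ξ ν)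
    (hBnonneg : ∀ x : H, 0 ≤ B x x) (hBzero : ∀ x : H, B x x ≤ 0 → x = 0)
    (x y : H) : (B x y) ^ 2 ≤ B x x * B y y := by
  by_cases hy : y = 0
  · subst hy; simp
  · have hyy : 0 < B y y := by
      rcases lt_or_eq_of_le (hBnonneg y) with h | h
      · exact h
      · exact absurd (hBzero y h.ge) hy
    have h1 := hBnonneg ((B y y) • x - (B x y) • y)
    have h2 : B ((B y y) • x - (B x y) • y) ((B y y) • x - (B x y) • y)
        = (B y y) ^ 2 * B x x - 2 * (B y y) * (B x y) ^ 2 + (B x y) ^ 2 * (B y y) := by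
      simp only [map_sub, map_smul, ContinuousLinearMap.sub_apply,
        ContinuousLinearMap.smul_apply, smul_eq_mul]
      rw [hBsymm y x]
      ring
    rw [h2] at h1
    nlinarith

private lemma psd_dlow {C₅ p D bee g : ℝ} (hC₅ : 0 < C₅) (hD : 0 ≤ D) (hbee : 0 ≤ bee)
    (hcs : p ^ 2 ≤ D * bee) (hl4 : C₅ * bee ≤ p) (hconvex : g ≤ p) : C₅ * g ≤ D := by
  rcases le_or_gt p 0 with hp | hp
  · have h1 : g ≤ 0 := le_trans hconvex hp
    nlinarith
  · have hb2 : bee ≤ p / C₅ := by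
      rw [le_div_iff₀ hC₅]; nlinarith
    have h4 : p ^ 2 ≤ D * (p / C₅) :=
      le_trans hcs (mul_le_mul_of_nonneg_left hb2 hD)
    have h2 : C₅ * p ≤ D := by
      have h5 : C₅ * p ^ 2 ≤ D * p := by
        rw [div_eq_mul_inv] at h4
        have := mul_le_mul_of_nonneg_left h4 hC₅.le
        calc C₅ * p ^ 2 ≤ C₅ * (D * (p * C₅⁻¹)) := this
          _ = D * p * (C₅ * C₅⁻¹) := by ring
          _ = D * p := by rw [mul_inv_cancel₀ (ne_of_gt hC₅), mul_one]
      nlinarith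
    nlinarith

set_option maxHeartbeats 2000000 in
/-- **Statement 4.** (Geometric convergence of the PSD iteration, Theorem 2.4.)
Under assumptions (E1)–(E3) and (L1)–(L5): `E` twice Fréchet differentiable, strictly
convex and coercive; `B` a symmetric, bounded, coercive continuous bilinear form;
the PSD sequence satisfies `B (d k) ξ = -E' (u k) ξ`, `α k` is the unique global
minimizer of `α ↦ E (u k + α • d k)`, and `u (k+1) = u k + α k • d k`.
(L4): `C₅ ‖ξ-ν‖_L² ≤ (E' ξ - E' ν)(ξ-ν)`; (L5): `|E'' ν (ξ,ξ)| ≤ C₆ ‖ξ‖_L²`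
whenever `E ν ≤ E (u 0)`.  `ustar` is the unique minimizer of `E` with `E' ustar = 0`.
Additionally (L6): `C₈ ‖ξ‖_L² ≤ E'' ν (ξ,ξ)` for all `ν, ξ`.  Then, with
`C₇ := 1 - C₅/(2 C₆)` and `e^k := ustar - u k`, for every `k`:
`‖e^k‖_L² ≤ (2/C₈) · C₇^k · (E (u 0) - E ustar)`. -/
theorem statement5 {H : Type*} [NormedAddCommGroup H] [InnerProductSpace ℝ H]
    [CompleteSpace H]
    (E : H → ℝ) (E' : H → H →L[ℝ] ℝ) (E'' : H → H →L[ℝ] H →L[ℝ] ℝ)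
    (hE' : ∀ x : H, HasFDerivAt E (E' x) x)
    (hE'' : ∀ x : H, HasFDerivAt E' (E'' x) x)
    (hconv : ∀ ν ξ : H, 0 ≤ E'' ν ξ ξ)
    (hconv' : ∀ (ν ξ : H), ξ ≠ 0 → 0 < E'' ν ξ ξ)
    (C₁ C₂ : ℝ) (hC₁ : 0 < C₁) (hC₂ : 0 ≤ C₂)
    (hcoer : ∀ ν : H, C₁ * ‖ν‖ ^ 2 ≤ E ν + C₂)
    (B : H →L[ℝ] H →L[ℝ] ℝ)
    (hBsymm : ∀ ν ξ : H, B ν ξ = B ξ ν)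
    (C₃ C₄ : ℝ) (hC₃ : 0 < C₃) (hC₄ : 0 < C₄)
    (hBbound : ∀ ν ξ : H, |B ν ξ| ≤ C₃ * ‖ν‖ * ‖ξ‖)
    (hBcoer : ∀ ν : H, C₄ * ‖ν‖ ^ 2 ≤ B ν ν)
    (u : ℕ → H) (d : ℕ → H) (α : ℕ → ℝ)
    (hd : ∀ (k : ℕ) (ξ : H), B (d k) ξ = -E' (u k) ξ)
    (hmin : ∀ (k : ℕ) (β : ℝ), E (u k + α k • d k) ≤ E (u k + β • d k))
    (huniq : ∀ (k : ℕ) (β : ℝ), E (u k + β • d k) = E (u k + α k • d k) → β = α k)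
    (hupd : ∀ k : ℕ, u (k + 1) = u k + α k • d k)
    (C₅ C₆ : ℝ) (hC₅ : 0 < C₅) (hC₆ : 0 < C₆)
    (hL4 : ∀ ν ξ : H, C₅ * B (ξ - ν) (ξ - ν) ≤ E' ξ (ξ - ν) - E' ν (ξ - ν))
    (hL5 : ∀ ν : H, E ν ≤ E (u 0) → ∀ ξ : H, |E'' ν ξ ξ| ≤ C₆ * B ξ ξ)
    (ustar : H)
    (hustar_min : ∀ ν : H, E ustar ≤ E ν)
    (hustar_uniq : ∀ ν : H, ν ≠ ustar → E ustar < E ν)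
    (hustar_crit : ∀ ξ : H, E' ustar ξ = 0)
    (C₈ : ℝ) (hC₈ : 0 < C₈)
    (hL6 : ∀ ν ξ : H, C₈ * B ξ ξ ≤ E'' ν ξ ξ) :
    ∀ k : ℕ, B (ustar - u k) (ustar - u k) ≤
      (2 / C₈) * (1 - C₅ / (2 * C₆)) ^ k * (E (u 0) - E ustar) := by
  -- basic facts about B
  have hBnonneg : ∀ x : H, 0 ≤ B x x := fun x => le_trans (by positivity) (hBcoer x)
  have hBzero : ∀ x : H, B x x ≤ 0 → x = 0 := by
    intro x hx
    have h1 := hBcoer x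
    have h2 : ‖x‖ ^ 2 ≤ 0 := by nlinarith
    have h4 : ‖x‖ ^ 2 = 0 := le_antisymm h2 (by positivity)
    have h3 : ‖x‖ = 0 := by
      exact pow_eq_zero_iff (by norm_num) |>.1 h4
    exact norm_eq_zero.1 h3
  -- global lower Taylor bound between two points
  have lowerT : ∀ a v : H, E a + E' a v + C₈ / 2 * B v v ≤ E (a + v) := by
    intro a v
    have h := psd_taylor_lower (φ := fun s : ℝ => E (a + s • v))
      (φ' := fun s : ℝ => E' (a + s • v) v)
      (φ'' := fun s : ℝ => E'' (a + s • v) v v)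
      (psd_hasDerivAt_line hE' a v) (psd_hasDerivAt_line' hE'' a v)
      (c := C₈ * B v v) zero_le_one (fun t _ => hL6 _ v)
    simp only [zero_smul, add_zero, one_smul, one_pow, mul_one] at h
    linarith
  -- the gap estimate via (L6)
  have hgap : ∀ ν : H, C₈ / 2 * B (ustar - ν) (ustar - ν) ≤ E ν - E ustar := by
    intro ν
    have h := lowerT ustar (ν - ustar)
    have h2 : E' ustar (ν - ustar) = 0 := hustar_crit _
    have h3 : B (ν - ustar) (ν - ustar) = B (ustar - ν) (ustar - ν) := by
      have hx : ν - ustar = -(ustar - ν) := by abel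
      rw [hx]; simp [map_sub, ContinuousLinearMap.sub_apply]; ring
    rw [h2, h3] at h
    simp only [add_sub_cancel] at h
    linarith
  by_cases h0 : u 0 = ustar
  · -- degenerate case: the iteration never moves
    have hall : ∀ k, u k = ustar := by
      intro k
      induction k with
      | zero => exact h0
      | succ n ih =>
        have hdn : d n = 0 := by
          apply hBzero
          have h1 := hd n (d n)
          rw [ih, hustar_crit (d n)] at h1
          simp [h1]
        rw [hupd n, hdn, smul_zero, add_zero, ih]
    intro k
    simp [hall k, h0]
  · -- main case: u 0 ≠ ustar; first show C₅ ≤ C₆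
    have hΔ0 : 0 ≤ E (u 0) - E ustar := sub_nonneg.2 (hustar_min _)
    have hC₅₆ : C₅ ≤ C₆ := by
      set w : H := u 0 - ustar with hw
      have hwne : w ≠ 0 := sub_ne_zero.2 h0
      have hww : 0 < B w w :=
        lt_of_lt_of_le (mul_pos hC₄ (pow_pos (norm_pos_iff.2 hwne) 2)) (hBcoer w)
      have hust1 : ustar + (1:ℝ) • w = u 0 := by rw [hw]; simp
      have hψ := psd_hasDerivAt_line hE' ustar w
      have hψ' := psd_hasDerivAt_line' hE'' ustar w
      have hψ'0 : E' (ustar + (0:ℝ) • w) w = 0 := by simp [hustar_crit w]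
      have hψ'mono : ∀ p q : ℝ, p ≤ q →
          E' (ustar + p • w) w ≤ E' (ustar + q • w) w := fun p q hpq =>
        psd_mono_aux hψ' hpq (fun t _ => hconv _ w)
      -- energy condition on the segment
      have hcond : ∀ t ∈ Set.Icc (0:ℝ) 1, E (ustar + t • w) ≤ E (u 0) := by
        intro t ht
        have h1 : E (ustar + t • w) ≤ E (ustar + (1:ℝ) • w) := by
          apply psd_mono_aux hψ ht.2
          intro r hr
          have h2 : E' (ustar + (0:ℝ) • w) w ≤ E' (ustar + r • w) w :=
            hψ'mono 0 r (le_trans ht.1 hr.1)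
          rw [hψ'0] at h2
          exact h2
        rwa [hust1] at h1
      -- upper derivative estimate at 1
      have hub : E' (ustar + (1:ℝ) • w) w ≤
          E' (ustar + (0:ℝ) • w) w + (C₆ * B w w) * 1 := by
        apply psd_deriv_upper hψ' zero_le_one
        intro t ht
        exact le_of_abs_le (hL5 _ (hcond t ht) w)
      rw [hψ'0, hust1, zero_add, mul_one] at hub
      -- (L4)
      have hl4 := hL4 ustar (u 0)
      rw [hustar_crit (u 0 - ustar)] at hl4
      have : C₅ * B w w ≤ C₆ * B w w := by
        rw [hw]
        calc C₅ * B (u 0 - ustar) (u 0 - ustar)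
            ≤ E' (u 0) (u 0 - ustar) - 0 := hl4
          _ = E' (u 0) w := by rw [hw, sub_zero]
          _ ≤ C₆ * B w w := hub
      exact le_of_mul_le_mul_right (by simpa [mul_comm] using this) hww
    have hC₇pos : 0 < 1 - C₅ / (2 * C₆) := by
      have : C₅ / (2 * C₆) < 1 := by
        rw [div_lt_one (by positivity)]
        linarith
      linarith
    have hC₇lt1 : 1 - C₅ / (2 * C₆) < 1 := by
      have : 0 < C₅ / (2 * C₆) := by positivity
      linarith
    -- Main induction: geometric energy decay
    have key : ∀ k : ℕ, E (u k) - E ustar ≤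
        (1 - C₅ / (2 * C₆)) ^ k * (E (u 0) - E ustar) := by
      intro k
      induction k with
      | zero => simp
      | succ n ih =>
        have hEn : E (u n) ≤ E (u 0) := by
          have hp : (1 - C₅ / (2 * C₆)) ^ n ≤ 1 := pow_le_one₀ hC₇pos.le hC₇lt1.le
          nlinarith
        by_cases hdn : d n = 0
        · -- critical point: u n is already the minimizer
          have hE'n : ∀ ξ : H, E' (u n) ξ = 0 := by
            intro ξ
            have h1 := hd n ξ
            rw [hdn] at h1
            simp at h1
            linarith [h1]
          have heq : E (u n) = E ustar := by
            have h1 := lowerT (u n) (ustar - u n)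
            rw [hE'n (ustar - u n)] at h1
            simp only [add_zero, add_sub_cancel] at h1
            have h2 := hBnonneg (ustar - u n)
            have h3 := hustar_min (u n)
            nlinarith
          have hn1 : u (n + 1) = u n := by rw [hupd n, hdn, smul_zero, add_zero]
          rw [hn1, heq]
          simp only [sub_self]
          positivity
        · -- genuine descent step
          set D : ℝ := B (d n) (d n) with hDdef
          clear_value D
          have hDpos : 0 < D := by
            rw [hDdef]
            exact lt_of_lt_of_le (mul_pos hC₄ (pow_pos (norm_pos_iff.2 hdn) 2)) (hBcoer (d n))
          have hφ := psd_hasDerivAt_line hE' (u n) (d n)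
          have hφ' := psd_hasDerivAt_line' hE'' (u n) (d n)
          have hφ'0 : E' (u n + (0:ℝ) • d n) (d n) = -D := by
            have h1 := hd n (d n)
            rw [← hDdef] at h1
            simp only [zero_smul, add_zero]
            linarith
          have hφ'mono : ∀ p q : ℝ, p ≤ q →
              E' (u n + p • d n) (d n) ≤ E' (u n + q • d n) (d n) := fun p q hpq =>
            psd_mono_aux hφ' hpq (fun t _ => hconv _ (d n))
          -- α n is a critical point of the line energy
          have hαcrit : E' (u n + α n • d n) (d n) = 0 := by
            have hloc : IsLocalMin (fun t : ℝ => E (u n + t • d n)) (α n) :=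
              Filter.Eventually.of_forall (fun β => hmin n β)
            exact hloc.hasDerivAt_eq_zero (hφ (α n))
          have hα0 : 0 < α n := by
            by_contra hcon
            push_neg at hcon
            have h1 := hφ'mono (α n) 0 hcon
            rw [hαcrit, hφ'0] at h1
            linarith
          -- energy condition on [0, α n]
          have hcond : ∀ t ∈ Set.Icc (0:ℝ) (α n), E (u n + t • d n) ≤ E (u 0) := by
            intro t ht
            have h1 : -E (u n + (0:ℝ) • d n) ≤ -E (u n + t • d n) := by
              apply psd_mono_aux (g := fun s : ℝ => -E (u n + s • d n))
                (g' := fun s : ℝ => -E' (u n + s • d n) (d n))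
                (fun s => (hφ s).neg) ht.1
              intro r hr
              have h2 : E' (u n + r • d n) (d n) ≤ E' (u n + α n • d n) (d n) :=
                hφ'mono r (α n) (le_trans hr.2 ht.2)
              rw [hαcrit] at h2
              linarith
            simp only [zero_smul, add_zero] at h1
            linarith [hEn]
          have hφ''up : ∀ t ∈ Set.Icc (0:ℝ) (α n),
              E'' (u n + t • d n) (d n) (d n) ≤ C₆ * D := by
            intro t ht
            rw [hDdef]
            exact le_of_abs_le (hL5 _ (hcond t ht) (d n))
          -- lower bound on the step size: 1/C₆ ≤ α n
          have hαinv : 1 / C₆ ≤ α n := by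
            have h1 : E' (u n + α n • d n) (d n) ≤
                E' (u n + (0:ℝ) • d n) (d n) + (C₆ * D) * α n :=
              psd_deriv_upper hφ' hα0.le hφ''up
            rw [hαcrit, hφ'0] at h1
            rw [div_le_iff₀ hC₆]
            nlinarith
          -- upper Taylor at s = 1/C₆
          have hs6 : (0:ℝ) ≤ 1 / C₆ := by positivity
          have hup : E (u n + (1 / C₆) • d n) ≤
              E (u n + (0:ℝ) • d n) + E' (u n + (0:ℝ) • d n) (d n) * (1 / C₆) +
                (C₆ * D) / 2 * (1 / C₆) ^ 2 := by
            apply psd_taylor_upper hφ hφ' hs6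
            intro t ht
            exact hφ''up t ⟨ht.1, le_trans ht.2 hαinv⟩
          rw [hφ'0] at hup
          simp only [zero_smul, add_zero] at hup
          have hdesc : E (u (n + 1)) ≤ E (u n) - D / (2 * C₆) := by
            have h1 : E (u (n + 1)) ≤ E (u n + (1 / C₆) • d n) := by
              rw [hupd n]; exact hmin n (1 / C₆)
            have h2 : E (u n) + -D * (1 / C₆) + C₆ * D / 2 * (1 / C₆) ^ 2
                = E (u n) - D / (2 * C₆) := by
              field_simp
              ring
            linarith [hup, h1, h2.le]
          -- lower bound on D via (L4) and Cauchy–Schwarz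
          have hconvex : E (u n) - E ustar ≤ B (d n) (ustar - u n) := by
            have h1 := lowerT (u n) (ustar - u n)
            have heq : u n + (ustar - u n) = ustar := by abel
            rw [heq] at h1
            have h2 : 0 ≤ C₈ / 2 * B (ustar - u n) (ustar - u n) := by
              have := hBnonneg (ustar - u n); positivity
            have h3 := hd n (ustar - u n)
            linarith
          have hl4' : C₅ * B (ustar - u n) (ustar - u n) ≤ B (d n) (ustar - u n) := by
            have h1 := hL4 (u n) ustar
            rw [hustar_crit (ustar - u n)] at h1
            have h2 := hd n (ustar - u n)
            linarith
          have hcs : (B (d n) (ustar - u n)) ^ 2 ≤ D * B (ustar - u n) (ustar - u n) := by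
            rw [hDdef]
            exact psd_cs B hBsymm hBnonneg hBzero (d n) (ustar - u n)
          have hDlow : C₅ * (E (u n) - E ustar) ≤ D :=
            psd_dlow hC₅ hDpos.le (hBnonneg (ustar - u n)) hcs hl4' hconvex
          -- combine
          have hstep : E (u (n + 1)) - E ustar ≤
              (1 - C₅ / (2 * C₆)) * (E (u n) - E ustar) := by
            have h1 : C₅ * (E (u n) - E ustar) / (2 * C₆) ≤ D / (2 * C₆) := by
              gcongr
            have h2 : (1 - C₅ / (2 * C₆)) * (E (u n) - E ustar)
                = (E (u n) - E ustar) - C₅ * (E (u n) - E ustar) / (2 * C₆) := by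
              field_simp
            linarith [hdesc]
          calc E (u (n + 1)) - E ustar
              ≤ (1 - C₅ / (2 * C₆)) * (E (u n) - E ustar) := hstep
            _ ≤ (1 - C₅ / (2 * C₆)) * ((1 - C₅ / (2 * C₆)) ^ n * (E (u 0) - E ustar)) :=
                mul_le_mul_of_nonneg_left ih hC₇pos.le
            _ = (1 - C₅ / (2 * C₆)) ^ (n + 1) * (E (u 0) - E ustar) := by ring
    -- conclude
    intro k
    have h1 := hgap (u k)
    have h2 := key k
    have h3 : C₈ / 2 * B (ustar - u k) (ustar - u k) ≤
        (1 - C₅ / (2 * C₆)) ^ k * (E (u 0) - E ustar) := le_trans h1 h2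
    calc B (ustar - u k) (ustar - u k)
        = (2 / C₈) * (C₈ / 2 * B (ustar - u k) (ustar - u k)) := by
          field_simp
      _ ≤ (2 / C₈) * ((1 - C₅ / (2 * C₆)) ^ k * (E (u 0) - E ustar)) :=
          mul_le_mul_of_nonneg_left h3 (by positivity)
      _ = (2 / C₈) * (1 - C₅ / (2 * C₆)) ^ k * (E (u 0) - E ustar) := by ring
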